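/- Let C be a nonempty closed convex subset of a real Hilbert space H and T a κ-strict pseudo-contraction of C into itself with 0 ≤ κ < 1. For x ∈ C, α ∈ (0,1], set y = (1−α)x + αTx. Then every fixed point p of T satisfies ‖y − p‖² ≤ ‖x − p‖² + α(κ − (1 − α))‖x − Tx‖². -/

import Mathlib

theorem strict_pseudo_contraction_mann_estimate
    {H : Type*} [NormedAddCommGroup H] [InnerProductSpace ℝ H] [CompleteSpace H]
    (C : Set H) (hC : IsClosed C) (hCconv : Convex ℝ C) (hCne : C.Nonempty)
    (T : H → H) (hT : ∀ x ∈ C, T x ∈ C)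
    (κ : ℝ) (hκ0 : 0 ≤ κ) (hκ1 : κ < 1)
    (hspc : ∀ x ∈ C, ∀ y ∈ C,
      ‖T x - T y‖ ^ 2 ≤ ‖x - y‖ ^ 2 + κ * ‖(x - T x) - (y - T y)‖ ^ 2)
    (x : H) (hx : x ∈ C) (α : ℝ) (hα0 : 0 < α) (hα1 : α ≤ 1)
    (y : H) (hy : y = (1 - α) • x + α • T x)
    (p : H) (hp : p ∈ C) (hfix : T p = p) :
    ‖y - p‖ ^ 2 ≤ ‖x - p‖ ^ 2 + α * (κ - (1 - α)) * ‖x - T x‖ ^ 2 := by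
  have key := hspc x hx p hp
  rw [hfix, sub_self, sub_zero] at key
  have h2 : ‖T x - p‖ ^ 2
      = ‖x - p‖ ^ 2 - 2 * inner ℝ (x - p) (x - T x) + ‖x - T x‖ ^ 2 := by
    have h : T x - p = (x - p) - (x - T x) := by abel
    rw [h, @norm_sub_sq_real]
  have hu : y - p = (x - p) - α • (x - T x) := by
    rw [hy]; module
  have h1 : ‖y - p‖ ^ 2
      = ‖x - p‖ ^ 2 - 2 * (α * inner ℝ (x - p) (x - T x)) + α ^ 2 * ‖x - T x‖ ^ 2 := by
    rw [hu, @norm_sub_sq_real, real_inner_smul_right, norm_smul, Real.norm_eq_abs,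
      mul_pow, sq_abs]
  have hineq : (1 - κ) * ‖x - T x‖ ^ 2 ≤ 2 * inner ℝ (x - p) (x - T x) := by
    nlinarith [key, h2]
  nlinarith [hineq, sq_nonneg ‖x - T x‖, hα0.le, hα1, mul_le_mul_of_nonneg_left hineq hα0.le]
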